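/- Let E(s) := s^s for s > 0 and E(0) := 1, and for a > d/2 and 0 ≤ ℓ ≤ a define E_{ℓ,a,d} := ( E(ℓ/(2a)) E(1/2 − ℓ/(2a)) / ( E(1/2 + ℓ/(2a)) E(1 − ℓ/(2a)) ) )^{d/2}. Then the function ℓ ↦ E_{ℓ,a,d} on [0,a] attains its maximum value 1 at ℓ = 0 and ℓ = a, and its minimum value (16/27)^{d/4} at ℓ = a/2. -/

import Mathlib

noncomputable section

/-- E(s) = s^s for s > 0, E(0) = 1. -/
def Efun (s : ℝ) : ℝ := if s = 0 then 1 else s ^ s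

/-- The constant E_{ℓ,a,d}. -/
def Elad (d : ℕ) (a ℓ : ℝ) : ℝ :=
  ((Efun (ℓ / (2 * a)) * Efun (1 / 2 - ℓ / (2 * a))) /
      (Efun (1 / 2 + ℓ / (2 * a)) * Efun (1 - ℓ / (2 * a)))) ^ ((d : ℝ) / 2)

open Real

lemma efun_eq {s : ℝ} (hs : 0 ≤ s) : Efun s = Real.exp (s * Real.log s) := by
  unfold Efun
  rcases eq_or_lt_of_le hs with h | h
  · simp [← h]
  · rw [if_neg (ne_of_gt h), rpow_def_of_pos h, mul_comm]

/-- the log of the ratio -/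
def gfun (t : ℝ) : ℝ :=
  t * log t + (1/2 - t) * log (1/2 - t) - (1/2 + t) * log (1/2 + t) - (1 - t) * log (1 - t)

lemma continuous_gfun : Continuous gfun := by
  unfold gfun
  have h1 : Continuous fun t : ℝ => t * log t := continuous_mul_log
  have h2 : Continuous fun t : ℝ => (1/2 - t) * log (1/2 - t) :=
    h1.comp (continuous_const.sub continuous_id)
  have h3 : Continuous fun t : ℝ => (1/2 + t) * log (1/2 + t) :=
    h1.comp (continuous_const.add continuous_id)
  have h4 : Continuous fun t : ℝ => (1 - t) * log (1 - t) :=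
    h1.comp (continuous_const.sub continuous_id)
  exact ((h1.add h2).sub h3).sub h4

lemma hasDerivAt_gfun {t : ℝ} (h0 : 0 < t) (h2 : t < 1/2) :
    HasDerivAt gfun (log t + log (1 - t) - log (1/2 - t) - log (1/2 + t)) t := by
  have d1 : HasDerivAt (fun x : ℝ => x * log x) (log t + 1) t :=
    hasDerivAt_mul_log (ne_of_gt h0)
  have a2 : HasDerivAt (fun x : ℝ => 1/2 - x) (-1 : ℝ) t := by
    simpa using (hasDerivAt_id t).const_sub (1/2 : ℝ)
  have d2 : HasDerivAt (fun x : ℝ => (1/2 - x) * log (1/2 - x))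
      ((log (1/2 - t) + 1) * (-1)) t :=
    (hasDerivAt_mul_log (by linarith : (1/2 - t) ≠ 0)).comp t a2
  have a3 : HasDerivAt (fun x : ℝ => 1/2 + x) (1 : ℝ) t := by
    simpa using (hasDerivAt_id t).const_add (1/2 : ℝ)
  have d3 : HasDerivAt (fun x : ℝ => (1/2 + x) * log (1/2 + x))
      ((log (1/2 + t) + 1) * 1) t :=
    (hasDerivAt_mul_log (by linarith : (1/2 + t) ≠ 0)).comp t a3
  have a4 : HasDerivAt (fun x : ℝ => 1 - x) (-1 : ℝ) t := by
    simpa using (hasDerivAt_id t).const_sub (1 : ℝ)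
  have d4 : HasDerivAt (fun x : ℝ => (1 - x) * log (1 - x))
      ((log (1 - t) + 1) * (-1)) t :=
    (hasDerivAt_mul_log (by linarith : (1 - t) ≠ 0)).comp t a4
  have := ((d1.add d2).sub d3).sub d4
  exact this.congr_deriv (by ring)

lemma gfun_zero : gfun 0 = 0 := by
  unfold gfun
  simp

lemma gfun_half : gfun (1/2) = 0 := by
  unfold gfun
  norm_num

lemma gfun_quarter : gfun (1/4) = (1/2) * log (16/27) := by
  unfold gfun
  have h4 : Real.log (1/4 : ℝ) = -(2 * log 2) := by
    rw [show (1/4 : ℝ) = 4⁻¹ by norm_num, Real.log_inv,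
      show (4 : ℝ) = 2^2 by norm_num, Real.log_pow]
    push_cast; ring
  have h34 : Real.log (3/4 : ℝ) = log 3 - 2 * log 2 := by
    rw [Real.log_div (by norm_num) (by norm_num),
      show (4 : ℝ) = 2^2 by norm_num, Real.log_pow]
    push_cast; ring
  have h1627 : Real.log (16/27 : ℝ) = 4 * log 2 - 3 * log 3 := by
    rw [Real.log_div (by norm_num) (by norm_num),
      show (16 : ℝ) = 2^4 by norm_num, show (27 : ℝ) = 3^3 by norm_num,
      Real.log_pow, Real.log_pow]
    push_cast; ring
  norm_num [h4, h34, h1627]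
  ring

lemma gfun_anti : StrictAntiOn gfun (Set.Icc 0 (1/4)) := by
  apply strictAntiOn_of_deriv_neg (convex_Icc _ _) continuous_gfun.continuousOn
  intro t ht
  rw [interior_Icc] at ht
  obtain ⟨h0, h4⟩ := ht
  rw [(hasDerivAt_gfun h0 (by linarith)).deriv]
  have hlt : t * (1 - t) < (1/2 - t) * (1/2 + t) := by nlinarith
  have h1 : log t + log (1 - t) = log (t * (1 - t)) :=
    (Real.log_mul (ne_of_gt h0) (by linarith)).symm
  have h2 : log (1/2 - t) + log (1/2 + t) = log ((1/2 - t) * (1/2 + t)) :=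
    (Real.log_mul (by linarith) (by linarith)).symm
  have := Real.log_lt_log (by nlinarith) hlt
  linarith [h1, h2, this]

lemma gfun_mono : StrictMonoOn gfun (Set.Icc (1/4) (1/2)) := by
  apply strictMonoOn_of_deriv_pos (convex_Icc _ _) continuous_gfun.continuousOn
  intro t ht
  rw [interior_Icc] at ht
  obtain ⟨h4, h2'⟩ := ht
  rw [(hasDerivAt_gfun (by linarith) h2').deriv]
  have hlt : (1/2 - t) * (1/2 + t) < t * (1 - t) := by nlinarith
  have h1 : log t + log (1 - t) = log (t * (1 - t)) :=
    (Real.log_mul (by linarith) (by linarith)).symm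
  have h2 : log (1/2 - t) + log (1/2 + t) = log ((1/2 - t) * (1/2 + t)) :=
    (Real.log_mul (by linarith) (by linarith)).symm
  have := Real.log_lt_log (by nlinarith) hlt
  linarith [h1, h2, this]

lemma gfun_le_zero {t : ℝ} (h0 : 0 ≤ t) (h2 : t ≤ 1/2) : gfun t ≤ 0 := by
  rcases le_total t (1/4) with h | h
  · have := gfun_anti.antitoneOn (Set.mem_Icc.2 ⟨le_refl 0, by norm_num⟩)
      (Set.mem_Icc.2 ⟨h0, h⟩) h0
    rwa [gfun_zero] at this
  · have := gfun_mono.monotoneOn (Set.mem_Icc.2 ⟨h, h2⟩)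
      (Set.mem_Icc.2 ⟨by norm_num, le_refl _⟩) h2
    rwa [gfun_half] at this

lemma gfun_quarter_le {t : ℝ} (h0 : 0 ≤ t) (h2 : t ≤ 1/2) : gfun (1/4) ≤ gfun t := by
  rcases le_total t (1/4) with h | h
  · exact gfun_anti.antitoneOn (Set.mem_Icc.2 ⟨h0, h⟩)
      (Set.mem_Icc.2 ⟨by norm_num, le_refl _⟩) h
  · exact gfun_mono.monotoneOn (Set.mem_Icc.2 ⟨le_refl (1/4 : ℝ), by norm_num⟩)
      (Set.mem_Icc.2 ⟨h, h2⟩) h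

lemma elad_eq (d : ℕ) (a ℓ : ℝ) (h0 : 0 ≤ ℓ / (2 * a)) (h2 : ℓ / (2 * a) ≤ 1/2) :
    Elad d a ℓ = Real.exp (gfun (ℓ / (2 * a)) * ((d : ℝ) / 2)) := by
  set t := ℓ / (2 * a) with ht
  unfold Elad
  rw [efun_eq h0, efun_eq (by linarith : (0:ℝ) ≤ 1/2 - t),
    efun_eq (by linarith : (0:ℝ) ≤ 1/2 + t), efun_eq (by linarith : (0:ℝ) ≤ 1 - t),
    ← Real.exp_add, ← Real.exp_add, ← Real.exp_sub]
  rw [← Real.exp_log (x := Real.exp _ ^ ((d:ℝ)/2)) (Real.rpow_pos_of_pos (Real.exp_pos _) _),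
    Real.log_rpow (Real.exp_pos _), Real.log_exp]
  congr 1
  unfold gfun
  ring

theorem stmt_3 (d : ℕ) (hd : 0 < d) (a : ℝ) (ha : (d : ℝ) / 2 < a) :
    (∀ ℓ : ℝ, 0 ≤ ℓ → ℓ ≤ a →
      Elad d a ℓ ≤ 1 ∧ (16 / 27 : ℝ) ^ ((d : ℝ) / 4) ≤ Elad d a ℓ) ∧
    Elad d a 0 = 1 ∧ Elad d a a = 1 ∧ Elad d a (a / 2) = (16 / 27 : ℝ) ^ ((d : ℝ) / 4) := by
  have hdpos : (0 : ℝ) < d := by exact_mod_cast hd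
  have hapos : (0 : ℝ) < a := lt_trans (by positivity) ha
  have hrhs : (16 / 27 : ℝ) ^ ((d : ℝ) / 4) = Real.exp (gfun (1/4) * ((d : ℝ) / 2)) := by
    rw [Real.rpow_def_of_pos (by norm_num), gfun_quarter]
    ring_nf
  constructor
  · intro ℓ hℓ0 hℓa
    have h0 : 0 ≤ ℓ / (2 * a) := by positivity
    have h2 : ℓ / (2 * a) ≤ 1/2 := by
      rw [div_le_iff₀ (by linarith)]
      linarith
    rw [elad_eq d a ℓ h0 h2, hrhs]
    constructor
    · rw [Real.exp_le_one_iff]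
      exact mul_nonpos_of_nonpos_of_nonneg (gfun_le_zero h0 h2) (by positivity)
    · apply Real.exp_le_exp.2
      exact mul_le_mul_of_nonneg_right (gfun_quarter_le h0 h2) (by positivity)
  · have h00 : (0 : ℝ) / (2 * a) = 0 := by simp
    have ha2 : a / (2 * a) = 1 / 2 := by
      field_simp
    have ha4 : a / 2 / (2 * a) = 1 / 4 := by
      field_simp
      ring
    refine ⟨?_, ?_, ?_⟩
    · rw [elad_eq d a 0 (by rw [h00]) (by rw [h00]; norm_num), h00, gfun_zero]
      simp
    · rw [elad_eq d a a (by rw [ha2]; norm_num) (by rw [ha2]), ha2, gfun_half]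
      simp
    · rw [elad_eq d a (a/2) (by rw [ha4]; norm_num) (by rw [ha4]; norm_num), ha4, hrhs]

end
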